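/- arXiv:1209.1329 — 2 statements merged into one kernel-verified Lean document; each statement's English description precedes it below -/
import Mathlib

section
/- For all integers n, m ≥ 0, every integer k with 0 ≤ k ≤ n+m, and all nonzero real numbers a₁, a₂, the linearization coefficient is given by the explicit double-sum formula β_k^{(n,m)}(a₁,a₂) = (a₁^{k−m} a₂^{k−n} (1/2)_k)/(4^{m+n−k} (m+n−k)! (1/2)_n (1/2)_m) · Σ_{i=0}^{m+n−k} a₁^{m+n−k−i} · C(m+n−k, i) · (n+1−i)_{2i} · Σ_{j=0}^{m+n−k−i} (−1)^j · C(m+n−k−i, j) · (−n+k+j+i+1)_{2(m+n−k−i−j)} · (k+2−j)_{2j} · a₂^{j+i}, where C(p, q) denotes the binomial coefficient. -/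
open Finset

/-- The Bessel polynomial `q_n(u) = ∑_{k=0}^n (n!(2n−k)! 2^k)/((2n)!(n−k)! k!) u^k`. -/
noncomputable def besselQ (n : ℕ) (u : ℝ) : ℝ :=
  ∑ k ∈ Finset.range (n + 1),
    ((n.factorial : ℝ) * (2 * n - k).factorial * 2 ^ k) /
      ((2 * n).factorial * (n - k).factorial * k.factorial) * u ^ k

/-- The Pochhammer symbol `(z)_k = z(z+1)⋯(z+k−1)` for a real `z`. -/
def poch (z : ℝ) (k : ℕ) : ℝ := ∏ i ∈ Finset.range k, (z + (i : ℝ))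

lemma poch_zero (z : ℝ) : poch z 0 = 1 := by simp [poch]

lemma poch_succ (z : ℝ) (k : ℕ) : poch z (k + 1) = poch z k * (z + k) := by
  simp [poch, Finset.prod_range_succ]

lemma poch_half (x : ℕ) : poch (1/2 : ℝ) x = (2 * x).factorial / (4 ^ x * x.factorial) := by
  induction x with
  | zero => simp [poch_zero]
  | succ x ih =>
      rw [poch_succ, ih]
      have h1 : (2 * (x + 1)) = (2 * x + 1) + 1 := by ring
      rw [h1]
      rw [Nat.factorial_succ, Nat.factorial_succ, Nat.factorial_succ]
      push_cast
      have h4 : (4:ℝ) ^ (x+1) = 4 ^ x * 4 := by ring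
      rw [h4]
      field_simp
      ring

lemma poch_half_ne_zero (x : ℕ) : poch (1/2 : ℝ) x ≠ 0 := by
  rw [poch_half]
  positivity

lemma poch_natCast_succ (x s : ℕ) :
    poch ((x : ℝ) + 1) s = (x + s).factorial / x.factorial := by
  induction s with
  | zero => simp [poch_zero, Nat.factorial_ne_zero]
  | succ s ih =>
      rw [poch_succ, ih]
      have : x + (s+1) = (x + s) + 1 := by ring
      rw [this, Nat.factorial_succ]
      have hx : (x.factorial : ℝ) ≠ 0 := by positivity
      push_cast
      field_simp
      ring

lemma cast_descFactorial (a k : ℕ) :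
    ((a.descFactorial k : ℕ) : ℝ) = ∏ s ∈ Finset.range k, ((a : ℝ) - s) := by
  induction k with
  | zero => simp
  | succ k ih =>
      rw [Finset.prod_range_succ, ← ih, Nat.descFactorial_succ]
      rcases le_or_gt k a with h | h
      · push_cast [h]; ring
      · rw [Nat.descFactorial_eq_zero_iff_lt.2 h] at ih ⊢
        simp

lemma poch_desc (a k : ℕ) :
    poch ((a : ℝ) + 1 - k) k = (a.descFactorial k : ℝ) := by
  rw [cast_descFactorial, poch]
  rw [← Finset.prod_range_reflect]
  apply Finset.prod_congr rfl
  intro i hi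
  simp only [Finset.mem_range] at hi
  have : (((k - 1 - i : ℕ)) : ℝ) = (k : ℝ) - 1 - i := by
    have : k - 1 - i = k - (1 + i) := by omega
    rw [this]
    push_cast [show 1 + i ≤ k by omega]
    ring
  rw [this]; ring

lemma poch_eq_zero {z : ℝ} {k : ℕ} (s : ℕ) (hs : s < k) (hz : z + s = 0) : poch z k = 0 :=
  Finset.prod_eq_zero (Finset.mem_range.2 hs) hz

open Finset Polynomial

lemma alt_rearrange (d : ℕ) (f : ℕ → ℝ) :
    ∑ r ∈ range (d + 2), (-1 : ℝ) ^ r * ((d+1).choose r) * f r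
      = ∑ r ∈ range (d + 1), (-1 : ℝ) ^ r * (d.choose r) * (f r - f (r + 1)) := by
  have h1 : ∑ r ∈ range (d + 2), (-1 : ℝ) ^ r * ((d+1).choose r) * f r
      = (∑ r ∈ range (d + 1), (-1 : ℝ) ^ (r+1) * ((d+1).choose (r+1)) * f (r+1))
        + (-1 : ℝ) ^ 0 * ((d+1).choose 0) * f 0 := Finset.sum_range_succ' _ _
  have h2 : ∑ r ∈ range (d + 1), (-1 : ℝ) ^ r * (d.choose r) * f r
      = (∑ r ∈ range d, (-1 : ℝ) ^ (r+1) * (d.choose (r+1)) * f (r+1))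
        + (-1 : ℝ) ^ 0 * (d.choose 0) * f 0 := Finset.sum_range_succ' _ _
  rw [h1]
  have expand : ∀ r, (-1 : ℝ) ^ (r+1) * ((d+1).choose (r+1)) * f (r+1)
      = (-1 : ℝ) ^ (r+1) * (d.choose r) * f (r+1)
        + (-1 : ℝ) ^ (r+1) * (d.choose (r+1)) * f (r+1) := by
    intro r
    rw [Nat.choose_succ_succ']
    push_cast
    ring
  rw [Finset.sum_congr rfl (fun r _ => expand r), Finset.sum_add_distrib]
  have h3 : ∑ r ∈ range (d + 1), (-1 : ℝ) ^ (r+1) * (d.choose (r+1)) * f (r+1)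
      = ∑ r ∈ range d, (-1 : ℝ) ^ (r+1) * (d.choose (r+1)) * f (r+1) := by
    rw [Finset.sum_range_succ, Nat.choose_succ_self]
    simp
  rw [h3]
  have h4 : ∑ x ∈ range (d+1), (-1:ℝ)^(x+1) * (d.choose x) * f (x+1)
      = - ∑ x ∈ range (d+1), (-1:ℝ)^x * (d.choose x) * f (x+1) := by
    rw [← Finset.sum_neg_distrib]
    exact Finset.sum_congr rfl fun x _ => by ring
  have h5 : ∑ r ∈ range (d+1), (-1:ℝ)^r * (d.choose r) * (f r - f (r+1))
      = (∑ r ∈ range (d+1), (-1:ℝ)^r * (d.choose r) * f r)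
        - ∑ r ∈ range (d+1), (-1:ℝ)^r * (d.choose r) * f (r+1) := by
    rw [← Finset.sum_sub_distrib]
    exact Finset.sum_congr rfl fun r _ => by ring
  simp only [Nat.choose_zero_right, Nat.cast_one, pow_zero, one_mul] at h2 ⊢
  linear_combination h4 - h5 - h2

lemma comp_X_add_one_ne_zero {P : ℝ[X]} (hP : P ≠ 0) : P.comp (X + 1) ≠ 0 := by
  intro h
  apply hP
  apply Polynomial.funext
  intro r
  have := congrArg (Polynomial.eval (r - 1)) h
  simp [Polynomial.eval_comp] at this
  simpa using this

lemma alt_sum_poly : ∀ (d : ℕ) (P : ℝ[X]), P.degree < (d : ℕ) →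
    ∑ r ∈ range (d + 1), (-1 : ℝ) ^ r * (d.choose r) * P.eval (r : ℝ) = 0 := by
  intro d
  induction d with
  | zero =>
      intro P hP
      have : P = 0 := by
        by_contra h
        rw [Polynomial.degree_eq_natDegree h] at hP
        exact absurd hP (by exact_mod_cast Nat.not_lt_zero _)
      simp [this]
  | succ d ih =>
      intro P hP
      by_cases hP0 : P = 0
      · simp [hP0]
      set Q : ℝ[X] := P - P.comp (X + 1) with hQ
      have hcomp0 : P.comp (X + 1) ≠ 0 := comp_X_add_one_ne_zero hP0
      have hdegeq : P.degree = (P.comp (X + 1)).degree := by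
        rw [Polynomial.degree_eq_natDegree hP0, Polynomial.degree_eq_natDegree hcomp0]
        rw [Polynomial.natDegree_comp]
        have : (X + 1 : ℝ[X]).natDegree = 1 := by
          simpa using Polynomial.natDegree_X_add_C (1 : ℝ)
        rw [this, mul_one]
      have hlc : P.leadingCoeff = (P.comp (X + 1)).leadingCoeff := by
        rw [Polynomial.leadingCoeff_comp (by
          have : (X + 1 : ℝ[X]).natDegree = 1 := by
            simpa using Polynomial.natDegree_X_add_C (1 : ℝ)
          omega)]
        have : (X + 1 : ℝ[X]).leadingCoeff = 1 := by
          simpa using Polynomial.leadingCoeff_X_add_C (1 : ℝ)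
        rw [this, one_pow, mul_one]
      have hQdeg : Q.degree < P.degree := Polynomial.degree_sub_lt hdegeq hP0 hlc
      have hQd : Q.degree < (d : ℕ) := by
        have hPd : P.degree ≤ ((d : ℕ) : WithBot ℕ) := by
          rcases Polynomial.degree_eq_natDegree hP0 ▸ hP with h
          rw [Polynomial.degree_eq_natDegree hP0]
          exact_mod_cast (by exact_mod_cast Nat.lt_succ_iff.mp (by exact_mod_cast h))
        exact lt_of_lt_of_le hQdeg hPd
      have key := alt_rearrange d (fun r => P.eval (r : ℝ))
      have evalQ : ∀ r : ℕ, Q.eval (r : ℝ) = P.eval (r : ℝ) - P.eval ((r : ℝ) + 1) := by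
        intro r
        simp [hQ, Polynomial.eval_comp]
      have : ∑ r ∈ range (d + 1 + 1), (-1 : ℝ) ^ r * ((d+1).choose r) * P.eval (r : ℝ)
          = ∑ r ∈ range (d + 1), (-1 : ℝ) ^ r * (d.choose r) * Q.eval (r : ℝ) := by
        rw [key]
        apply Finset.sum_congr rfl
        intro r _
        rw [evalQ r]
        push_cast
        ring_nf
      rw [this, ih Q hQd]

lemma core_vanish (d t : ℕ) (hd : 1 ≤ d) :
    ∑ r ∈ range (d + 1), (-1 : ℝ) ^ r * (d.choose r) * ((t + 2*r).descFactorial (d - 1) : ℝ) = 0 := by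
  set P : ℝ[X] := ∏ s ∈ range (d - 1), (Polynomial.C ((t : ℝ) - s) + Polynomial.C 2 * X) with hP
  have hdeg : P.degree < (d : ℕ) := by
    have h1 : P.natDegree ≤ d - 1 := by
      refine le_trans (Polynomial.natDegree_prod_le _ _) ?_
      refine le_trans (Finset.sum_le_card_nsmul _ _ 1 ?_) (by simp)
      intro s _
      refine le_trans (Polynomial.natDegree_add_le _ _) ?_
      rw [Polynomial.natDegree_C, Polynomial.natDegree_C_mul_X _ (by norm_num : (2:ℝ) ≠ 0)]
      simp
    calc P.degree ≤ (P.natDegree : WithBot ℕ) := Polynomial.degree_le_natDegree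
      _ < ((d : ℕ) : WithBot ℕ) := by exact_mod_cast (by omega : P.natDegree < d)
  have heval : ∀ r : ℕ, P.eval (r : ℝ) = ((t + 2*r).descFactorial (d - 1) : ℝ) := by
    intro r
    rw [cast_descFactorial]
    rw [hP, Polynomial.eval_prod]
    apply Finset.prod_congr rfl
    intro s _
    push_cast
    simp
    ring
  have := alt_sum_poly d P hdeg
  rw [Finset.sum_congr rfl (fun r _ => by rw [← heval r])]
  exact this
noncomputable def pc (n k : ℕ) : ℝ :=
  ((n.factorial : ℝ) * (2 * n - k).factorial * 2 ^ k) /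
      ((2 * n).factorial * (n - k).factorial * k.factorial)

noncomputable def besselQ' (n : ℕ) (u : ℝ) : ℝ := ∑ k ∈ Finset.range (n + 1), pc n k * u ^ k

/-- inner double-sum term of the γ formula, with the prefactor distributed in -/
noncomputable def trm (n m : ℕ) (a1 a2 : ℝ) (i i' j : ℕ) : ℝ :=
  (a1 ^ ((i : ℤ) - (m : ℤ)) * a2 ^ ((i : ℤ) - (n : ℤ)) * poch (1 / 2) i /
      (4 ^ (m + n - i) * ((m + n - i).factorial : ℝ) * poch (1 / 2) n * poch (1 / 2) m)) *
  (a1 ^ (m + n - i - i') * ((m + n - i).choose i' : ℝ) * poch ((n : ℝ) + 1 - (i' : ℝ)) (2 * i') *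
    ((-1 : ℝ) ^ j * ((m + n - i - i').choose j : ℝ) *
      poch (-(n : ℝ) + (i : ℝ) + (j : ℝ) + (i' : ℝ) + 1) (2 * (m + n - i - i' - j)) *
      poch ((i : ℝ) + 2 - (j : ℝ)) (2 * j) * a2 ^ (j + i')))

noncomputable def EE (n m : ℕ) (a1 a2 : ℝ) (i p q : ℕ) : ℝ :=
  trm n m a1 a2 i (n - p) (p + q - i)

noncomputable def gam (n m : ℕ) (a1 a2 : ℝ) (k : ℕ) : ℝ :=
  a1 ^ ((k : ℤ) - (m : ℤ)) * a2 ^ ((k : ℤ) - (n : ℤ)) * poch (1 / 2) k /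
    (4 ^ (m + n - k) * ((m + n - k).factorial : ℝ) * poch (1 / 2) n * poch (1 / 2) m) *
  ∑ i ∈ Finset.range (m + n - k + 1),
    a1 ^ (m + n - k - i) * ((m + n - k).choose i : ℝ) * poch ((n : ℝ) + 1 - (i : ℝ)) (2 * i) *
    ∑ j ∈ Finset.range (m + n - k - i + 1),
      (-1 : ℝ) ^ j * ((m + n - k - i).choose j : ℝ) *
        poch (-(n : ℝ) + (k : ℝ) + (j : ℝ) + (i : ℝ) + 1) (2 * (m + n - k - i - j)) *
        poch ((k : ℝ) + 2 - (j : ℝ)) (2 * j) * a2 ^ (j + i)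

lemma gam_eq_sum_trm (n m : ℕ) (a1 a2 : ℝ) (i : ℕ) :
    gam n m a1 a2 i =
      ∑ x ∈ (Finset.range (m + n - i + 1)).sigma
          (fun i' => Finset.range (m + n - i - i' + 1)), trm n m a1 a2 i x.1 x.2 := by
  rw [gam, Finset.mul_sum, Finset.sum_sigma]
  apply Finset.sum_congr rfl
  intro i' _
  rw [Finset.mul_sum, Finset.mul_sum]
  apply Finset.sum_congr rfl
  intro j _
  rw [trm]

lemma trm_vanish_left (n m : ℕ) (a1 a2 : ℝ) (i i' j : ℕ) (h : n < i') :
    trm n m a1 a2 i i' j = 0 := by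
  have hz : poch ((n : ℝ) + 1 - (i' : ℝ)) (2 * i') = 0 := by
    apply poch_eq_zero (i' - n - 1) (by omega)
    have e : (i' - n - 1 : ℕ) = i' - (n + 1) := by omega
    rw [e]
    push_cast [show n + 1 ≤ i' by omega]
    ring
  rw [trm, hz]; ring

lemma trm_vanish_right (n m : ℕ) (a1 a2 : ℝ) (i i' j : ℕ) (h : i + i' + j < n) :
    trm n m a1 a2 i i' j = 0 := by
  have hz : poch (-(n : ℝ) + (i : ℝ) + (j : ℝ) + (i' : ℝ) + 1) (2 * (m + n - i - i' - j)) = 0 := by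
    apply poch_eq_zero (n - i - j - i' - 1) (by omega)
    have e : (n - i - j - i' - 1 : ℕ) = n - (i + j + i' + 1) := by omega
    rw [e]
    push_cast [show i + j + i' + 1 ≤ n by omega]
    ring
  rw [trm, hz]; ring

lemma gam_eq (n m : ℕ) (a1 a2 : ℝ) (i : ℕ) (hi : i ≤ n + m) :
    gam n m a1 a2 i =
      ∑ p ∈ Finset.range (n + 1), ∑ q ∈ Finset.range (m + 1),
        (if i ≤ p + q then EE n m a1 a2 i p q else 0) := by
  rw [gam_eq_sum_trm]
  have step1 : ∑ x ∈ (Finset.range (m + n - i + 1)).sigma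
          (fun i' => Finset.range (m + n - i - i' + 1)), trm n m a1 a2 i x.1 x.2
      = ∑ x ∈ ((Finset.range (m + n - i + 1)).sigma
          (fun i' => Finset.range (m + n - i - i' + 1))).filter
            (fun x => x.1 ≤ n ∧ n ≤ i + x.1 + x.2), trm n m a1 a2 i x.1 x.2 := by
    refine (Finset.sum_filter_of_ne ?_).symm
    intro x hx hne
    constructor
    · by_contra h
      exact hne (trm_vanish_left n m a1 a2 i x.1 x.2 (by omega))
    · by_contra h
      exact hne (trm_vanish_right n m a1 a2 i x.1 x.2 (by omega))
  rw [step1]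
  have step2 : ∑ x ∈ ((Finset.range (m + n - i + 1)).sigma
          (fun i' => Finset.range (m + n - i - i' + 1))).filter
            (fun x => x.1 ≤ n ∧ n ≤ i + x.1 + x.2), trm n m a1 a2 i x.1 x.2
      = ∑ pq ∈ (Finset.range (n + 1) ×ˢ Finset.range (m + 1)).filter
            (fun pq => i ≤ pq.1 + pq.2), EE n m a1 a2 i pq.1 pq.2 := by
    refine Finset.sum_nbij' (fun x => (n - x.1, i + x.1 + x.2 - n))
      (fun pq => ⟨n - pq.1, pq.1 + pq.2 - i⟩) ?_ ?_ ?_ ?_ ?_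
    · intro x hx
      simp only [Finset.mem_filter, Finset.mem_sigma, Finset.mem_range,
        Finset.mem_product] at hx ⊢
      omega
    · intro pq hpq
      simp only [Finset.mem_filter, Finset.mem_sigma, Finset.mem_range,
        Finset.mem_product] at hpq ⊢
      omega
    · intro x hx
      simp only [Finset.mem_filter, Finset.mem_sigma, Finset.mem_range] at hx
      ext <;> simp <;> omega
    · intro pq hpq
      simp only [Finset.mem_filter, Finset.mem_product, Finset.mem_range] at hpq
      have h1 : n - (n - pq.1) = pq.1 := by omega
      have h2 : n - pq.1 + (pq.1 + pq.2 - i) + i - n = pq.2 := by omega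
      simp only [h1]
      have : i + (n - pq.1) + (pq.1 + pq.2 - i) - n = pq.2 := by omega
      simp [this]
    · intro x hx
      simp only [Finset.mem_filter, Finset.mem_sigma, Finset.mem_range] at hx
      rw [EE]
      have h1 : n - (n - x.1) = x.1 := by omega
      have h2 : n - x.1 + (i + x.1 + x.2 - n) - i = x.2 := by omega
      rw [h1, h2]
  rw [step2, Finset.sum_filter, Finset.sum_product]
noncomputable def trmS (n m : ℕ) (i i' j : ℕ) : ℝ :=
  (poch (1/2) i / (4 ^ (m+n-i) * ((m+n-i).factorial : ℝ) * poch (1/2) n * poch (1/2) m)) *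
  (((m+n-i).choose i' : ℝ) * poch ((n:ℝ)+1-(i':ℝ)) (2*i') *
    ((-1:ℝ)^j * ((m+n-i-i').choose j : ℝ) *
      poch (-(n:ℝ)+(i:ℝ)+(j:ℝ)+(i':ℝ)+1) (2*(m+n-i-i'-j)) *
      poch ((i:ℝ)+2-(j:ℝ)) (2*j)))

lemma trm_eq_apow (n m i i' j p q : ℕ) (a1 a2 : ℝ) (ha1 : a1 ≠ 0) (ha2 : a2 ≠ 0)
    (h1 : i + (m+n-i-i') = p + m) (h2 : i + (j+i') = q + n) :
    trm n m a1 a2 i i' j = a1^p * a2^q * trmS n m i i' j := by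
  have key1 : a1 ^ ((i:ℤ) - (m:ℤ)) * a1 ^ (m+n-i-i') = a1 ^ p := by
    rw [zpow_sub₀ ha1, zpow_natCast, zpow_natCast, div_mul_eq_mul_div, ← pow_add, h1, pow_add]
    field_simp
  have key2 : a2 ^ ((i:ℤ) - (n:ℤ)) * a2 ^ (j+i') = a2 ^ q := by
    rw [zpow_sub₀ ha2, zpow_natCast, zpow_natCast, div_mul_eq_mul_div, ← pow_add, h2, pow_add]
    field_simp
  rw [← key1, ← key2, trm, trmS]
  ring

lemma fact_ne_zero (x : ℕ) : ((x.factorial : ℕ) : ℝ) ≠ 0 :=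
  (Nat.cast_pos.mpr (Nat.factorial_pos x)).ne'

lemma diag_eq (n m p q : ℕ) (hp : p ≤ n) (hq : q ≤ m) (a1 a2 : ℝ)
    (ha1 : a1 ≠ 0) (ha2 : a2 ≠ 0) :
    pc (p+q) (p+q) * EE n m a1 a2 (p+q) p q = pc n p * pc m q * (a1^p * a2^q) := by
  rw [EE, show p + q - (p+q) = 0 from by omega]
  rw [trm_eq_apow n m (p+q) (n-p) 0 p q a1 a2 ha1 ha2 (by omega) (by omega)]
  rw [trmS]
  rw [show m+n-(p+q)-(n-p)-0 = m-q from by omega]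
  simp only [pow_zero, Nat.choose_zero_right, Nat.cast_one, Nat.cast_zero, add_zero,
    Nat.mul_zero, poch_zero, one_mul, mul_one]
  rw [show -(n:ℝ) + ((p+q:ℕ):ℝ) + ((n-p:ℕ):ℝ) + 1 = (q:ℝ)+1 from by push_cast [hp]; ring]
  rw [show (n:ℝ) + 1 - ((n-p:ℕ):ℝ) = (p:ℝ)+1 from by push_cast [hp]; ring]
  rw [poch_natCast_succ q (2*(m-q)), poch_natCast_succ p (2*(n-p))]
  rw [show q + 2*(m-q) = 2*m-q from by omega, show p + 2*(n-p) = 2*n-p from by omega]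
  rw [Nat.cast_choose ℝ (show n-p ≤ m+n-(p+q) from by omega)]
  rw [show m+n-(p+q)-(n-p) = m-q from by omega]
  simp only [poch_half]
  rw [pc, pc, pc]
  rw [show 2*(p+q)-(p+q) = p+q from by omega, show (p+q)-(p+q) = 0 from by omega]
  rw [show (4:ℝ)^(m+n-(p+q)) = 4^(m+n)/4^(p+q) from by
    rw [eq_div_iff (by positivity)]; rw [← pow_add]; congr 1; omega]
  have f1 := fact_ne_zero (m+n-(p+q))
  have f2 := fact_ne_zero (p+q)
  have f3 := fact_ne_zero p
  have f4 := fact_ne_zero q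
  have f5 := fact_ne_zero (n-p)
  have f6 := fact_ne_zero (m-q)
  have f7 := fact_ne_zero (2*(p+q))
  have f8 := fact_ne_zero (2*n)
  have f9 := fact_ne_zero (2*m)
  have f10 := fact_ne_zero n
  have f11 := fact_ne_zero m
  have f12 := fact_ne_zero (2*n-p)
  have f13 := fact_ne_zero (2*m-q)
  have g1 : (4:ℝ)^(m+n) ≠ 0 := by positivity
  have g2 : (4:ℝ)^(p+q) ≠ 0 := by positivity
  have g3 : (4:ℝ)^n ≠ 0 := by positivity
  have g4 : (4:ℝ)^m ≠ 0 := by positivity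
  have g5 : (2:ℝ)^(p+q) ≠ 0 := by positivity
  field_simp
  ring
lemma cast_descF_div (a k : ℕ) (h : k ≤ a) :
    ((a.descFactorial k : ℕ) : ℝ) = (a.factorial : ℝ) / ((a-k).factorial : ℝ) := by
  rw [eq_div_iff (fact_ne_zero _)]
  have h2 : a.descFactorial k * (a - k).factorial = a.factorial := by
    rw [Nat.mul_comm]; exact Nat.factorial_mul_descFactorial h
  exact_mod_cast congrArg (Nat.cast (R := ℝ)) h2

lemma neg_one_pow_sub (d r : ℕ) (hr : r ≤ d) :
    ((-1:ℝ))^(d-r) = (-1:ℝ)^d * (-1:ℝ)^r := by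
  have hsq : ((-1:ℝ))^r * (-1:ℝ)^r = 1 := by
    rw [← pow_add, ← two_mul, pow_mul]
    norm_num
  calc ((-1:ℝ))^(d-r) = ((-1:ℝ))^(d-r) * ((-1:ℝ)^r * (-1:ℝ)^r) := by rw [hsq, mul_one]
    _ = ((-1:ℝ))^(d-r+r) * (-1:ℝ)^r := by rw [pow_add]; ring
    _ = (-1:ℝ)^d * (-1:ℝ)^r := by rw [show d-r+r = d from by omega]

noncomputable def KC (n m p q t d : ℕ) : ℝ :=
  (-1:ℝ)^d * (2^t * ((p+q+1).factorial : ℝ) * poch ((p:ℝ)+1) (2*(n-p)) *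
      poch ((q:ℝ)+1) (2*(m-q))
    / ((t.factorial : ℝ) * 4^(m+n) * poch (1/2) n * poch (1/2) m * (d.factorial : ℝ)
        * ((n-p).factorial : ℝ) * ((m-q).factorial : ℝ)))

lemma term_eq (n m p q t r d : ℕ) (hp : p ≤ n) (hq : q ≤ m) (ht : t + d = p + q)
    (hr : r ≤ d) (hd : 1 ≤ d) (a1 a2 : ℝ) (ha1 : a1 ≠ 0) (ha2 : a2 ≠ 0) :
    pc (t+r) t * EE n m a1 a2 (t+r) p q =
      KC n m p q t d
      * ((-1:ℝ)^r * (d.choose r : ℝ) * ((t + 2*r).descFactorial (d-1) : ℝ))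
      * (a1^p * a2^q) := by
  unfold KC
  have hRcast : (t:ℝ) + d = (p:ℝ) + q := by exact_mod_cast ht
  rw [EE]
  rw [trm_eq_apow n m (t+r) (n-p) (p+q-(t+r)) p q a1 a2 ha1 ha2 (by omega) (by omega)]
  rw [trmS, pc]
  rw [show p+q-(t+r) = d-r from by omega]
  rw [show 2*(t+r)-t = t+2*r from by omega, show t+r-t = r from by omega]
  rw [show m+n-(t+r)-(n-p)-(d-r) = m-q from by omega]
  rw [Nat.cast_choose ℝ (show n-p ≤ m+n-(t+r) from by omega)]
  rw [show m+n-(t+r)-(n-p) = m+p-(t+r) from by omega]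
  rw [Nat.cast_choose ℝ (show d-r ≤ m+p-(t+r) from by omega)]
  rw [show m+p-(t+r)-(d-r) = m-q from by omega]
  rw [show (n:ℝ)+1-((n-p:ℕ):ℝ) = (p:ℝ)+1 from by push_cast [hp]; ring]
  rw [show -(n:ℝ) + ((t+r:ℕ):ℝ) + ((d-r:ℕ):ℝ) + ((n-p:ℕ):ℝ) + 1 = (q:ℝ)+1 from by
    push_cast [hp, hr]; linarith]
  rw [show ((t+r:ℕ):ℝ)+2-((d-r:ℕ):ℝ) = ((p+q+1:ℕ):ℝ)+1-((2*(d-r):ℕ):ℝ) from by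
    push_cast [hr]; linarith]
  rw [poch_desc (p+q+1) (2*(d-r))]
  rw [neg_one_pow_sub d r hr]
  rw [Nat.cast_choose ℝ hr]
  simp only [poch_half]
  rcases lt_or_ge (t + 2*r) (d-1) with hcase | hcase
  · rw [Nat.descFactorial_eq_zero_iff_lt.mpr (show p+q+1 < 2*(d-r) from by omega)]
    rw [Nat.descFactorial_eq_zero_iff_lt.mpr hcase]
    simp
  · rw [cast_descF_div (p+q+1) (2*(d-r)) (by omega)]
    rw [cast_descF_div (t+2*r) (d-1) (by omega)]
    rw [show p+q+1-2*(d-r) = t+2*r-(d-1) from by omega]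
    rw [show (4:ℝ)^(m+n-(t+r)) = 4^(m+n)/4^(t+r) from by
      rw [eq_div_iff (by positivity)]; rw [← pow_add]; congr 1; omega]
    have f1 := fact_ne_zero (m+n-(t+r))
    have f2 := fact_ne_zero t
    have f3 := fact_ne_zero r
    have f4 := fact_ne_zero (t+r)
    have f5 := fact_ne_zero (2*(t+r))
    have f6 := fact_ne_zero (n-p)
    have f7 := fact_ne_zero (m-q)
    have f8 := fact_ne_zero (d-r)
    have f9 := fact_ne_zero d
    have f10 := fact_ne_zero (m+p-(t+r))
    have f11 := fact_ne_zero (t+2*r-(d-1))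
    have f12 := fact_ne_zero n
    have f13 := fact_ne_zero m
    have f14 := fact_ne_zero (2*n)
    have f15 := fact_ne_zero (2*m)
    have f16 := fact_ne_zero (p+q+1)
    have f17 := fact_ne_zero (t+2*r)
    have g1 : (4:ℝ)^(m+n) ≠ 0 := by positivity
    have g2 : (4:ℝ)^(t+r) ≠ 0 := by positivity
    have g3 : (4:ℝ)^n ≠ 0 := by positivity
    have g4 : (4:ℝ)^m ≠ 0 := by positivity
    have g5 : (2:ℝ)^t ≠ 0 := by positivity
    have hm1r : ((-1:ℝ))^r ≠ 0 := pow_ne_zero _ (by norm_num)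
    field_simp

lemma besselInnerSum (n m p q t : ℕ) (hp : p ≤ n) (hq : q ≤ m) (a1 a2 : ℝ)
    (ha1 : a1 ≠ 0) (ha2 : a2 ≠ 0) (u : ℝ) :
    ∑ i ∈ Finset.range (n+m+1),
        (if t ≤ i then pc i t * u^t else 0) * (if i ≤ p+q then EE n m a1 a2 i p q else 0)
      = if t = p+q then pc n p * pc m q * (a1^p * a2^q) * u^t else 0 := by
  have hstep : ∀ i ∈ Finset.range (n+m+1),
      (if t ≤ i then pc i t * u^t else 0) * (if i ≤ p+q then EE n m a1 a2 i p q else 0)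
        = if i ∈ Finset.Icc t (p+q) then pc i t * EE n m a1 a2 i p q * u^t else 0 := by
    intro i _
    by_cases h1 : t ≤ i <;> by_cases h2 : i ≤ p+q
    · rw [if_pos h1, if_pos h2, if_pos (Finset.mem_Icc.mpr ⟨h1, h2⟩)]; ring
    · rw [if_pos h1, if_neg h2, if_neg (fun hc => h2 (Finset.mem_Icc.mp hc).2)]; ring
    · rw [if_neg h1, if_neg (fun hc => h1 (Finset.mem_Icc.mp hc).1)]; ring
    · rw [if_neg h1, if_neg (fun hc => h1 (Finset.mem_Icc.mp hc).1)]; ring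
  rw [Finset.sum_congr rfl hstep, Finset.sum_ite_mem]
  have hinter : (Finset.range (n+m+1)) ∩ Finset.Icc t (p+q) = Finset.Icc t (p+q) := by
    apply Finset.inter_eq_right.mpr
    intro i hi
    simp only [Finset.mem_Icc] at hi
    simp only [Finset.mem_range]
    omega
  rw [hinter]
  rcases Nat.lt_trichotomy t (p+q) with hlt | heq | hgt
  · rw [if_neg (by omega)]
    rw [← Finset.Ico_add_one_right_eq_Icc, Finset.sum_Ico_eq_sum_range]
    set d := p + q - t with hdd
    rw [show p+q+1-t = d+1 from by omega]
    have hterm : ∀ r ∈ Finset.range (d+1),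
        pc (t+r) t * EE n m a1 a2 (t+r) p q * u^t
          = (KC n m p q t d * (a1^p * a2^q) * u^t) *
            ((-1:ℝ)^r * (d.choose r : ℝ) * ((t + 2*r).descFactorial (d-1) : ℝ)) := by
      intro r hr
      simp only [Finset.mem_range] at hr
      rw [term_eq n m p q t r d hp hq (by omega) (by omega) (by omega) a1 a2 ha1 ha2]
      ring
    rw [Finset.sum_congr rfl hterm, ← Finset.mul_sum, core_vanish d t (by omega), mul_zero]
  · rw [if_pos heq, heq, Finset.Icc_self, Finset.sum_singleton,
      diag_eq n m p q hp hq a1 a2 ha1 ha2]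
  · rw [if_neg (by omega), Finset.Icc_eq_empty (by omega), Finset.sum_empty]

lemma ext_range (N i : ℕ) (hi : i ≤ N) (f : ℕ → ℝ) :
    ∑ t ∈ Finset.range (i+1), f t = ∑ t ∈ Finset.range (N+1), if t ≤ i then f t else 0 := by
  have hfil : Finset.filter (fun t => t ≤ i) (Finset.range (N+1)) = Finset.range (i+1) := by
    ext x
    simp only [Finset.mem_filter, Finset.mem_range]
    omega
  rw [← hfil, Finset.sum_filter]

lemma key_identity (n m : ℕ) (a1 a2 : ℝ) (ha1 : a1 ≠ 0) (ha2 : a2 ≠ 0) (u : ℝ) :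
    besselQ' n (a1 * u) * besselQ' m (a2 * u)
      = ∑ i ∈ Finset.range (n+m+1), gam n m a1 a2 i * besselQ' i u := by
  have hrhs : ∑ i ∈ Finset.range (n+m+1), gam n m a1 a2 i * besselQ' i u
      = ∑ i ∈ Finset.range (n+m+1), ∑ p ∈ Finset.range (n+1), ∑ q ∈ Finset.range (m+1),
          ∑ t ∈ Finset.range (n+m+1),
            (if t ≤ i then pc i t * u^t else 0) *
              (if i ≤ p+q then EE n m a1 a2 i p q else 0) := by
    apply Finset.sum_congr rfl
    intro i hi
    simp only [Finset.mem_range] at hi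
    rw [gam_eq n m a1 a2 i (by omega), besselQ',
      ext_range (n+m) i (by omega) (fun t => pc i t * u^t)]
    rw [Finset.sum_mul]
    apply Finset.sum_congr rfl
    intro p _
    rw [Finset.sum_mul]
    apply Finset.sum_congr rfl
    intro q _
    rw [Finset.mul_sum]
    apply Finset.sum_congr rfl
    intro t _
    ring
  rw [hrhs]
  rw [Finset.sum_comm]
  rw [Finset.sum_congr rfl (fun p _ => Finset.sum_comm)]
  rw [Finset.sum_congr rfl (fun p _ => Finset.sum_congr rfl (fun q _ => Finset.sum_comm))]
  have hinner : ∀ p ∈ Finset.range (n+1), ∀ q ∈ Finset.range (m+1),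
      ∑ t ∈ Finset.range (n+m+1), ∑ i ∈ Finset.range (n+m+1),
          (if t ≤ i then pc i t * u^t else 0) * (if i ≤ p+q then EE n m a1 a2 i p q else 0)
        = pc n p * pc m q * (a1^p * a2^q) * u^(p+q) := by
    intro p hp q hq
    simp only [Finset.mem_range] at hp hq
    rw [Finset.sum_congr rfl (fun t _ =>
      besselInnerSum n m p q t (by omega) (by omega) a1 a2 ha1 ha2 u)]
    rw [Finset.sum_ite_eq' (Finset.range (n+m+1)) (p+q)
      (fun t => pc n p * pc m q * (a1^p * a2^q) * u^t)]
    rw [if_pos (Finset.mem_range.mpr (by omega))]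
  rw [Finset.sum_congr rfl (fun p hp => Finset.sum_congr rfl (fun q hq => hinner p hp q hq))]
  rw [besselQ', besselQ', Finset.sum_mul_sum]
  apply Finset.sum_congr rfl
  intro p _
  apply Finset.sum_congr rfl
  intro q _
  rw [mul_pow, mul_pow, pow_add]
  ring
lemma pc_self_ne_zero (k : ℕ) : pc k k ≠ 0 := by
  rw [pc]
  apply div_ne_zero
  · apply mul_ne_zero (mul_ne_zero (fact_ne_zero k) (fact_ne_zero (2*k-k)))
    positivity
  · exact mul_ne_zero (mul_ne_zero (fact_ne_zero (2*k)) (fact_ne_zero (k-k))) (fact_ne_zero k)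

noncomputable def Qp (i : ℕ) : Polynomial ℝ :=
  ∑ t ∈ Finset.range (i+1), Polynomial.C (pc i t) * Polynomial.X ^ t

lemma Qp_eval (i : ℕ) (u : ℝ) : (Qp i).eval u = besselQ' i u := by
  rw [Qp, besselQ', Polynomial.eval_finset_sum]
  simp

lemma Qp_coeff (i j : ℕ) : (Qp i).coeff j = if j ≤ i then pc i j else 0 := by
  rw [Qp, Polynomial.finset_sum_coeff]
  simp only [Polynomial.coeff_C_mul, Polynomial.coeff_X_pow, mul_ite, mul_one, mul_zero]
  rw [Finset.sum_ite_eq (Finset.range (i+1)) j (fun t => pc i t)]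
  simp [Nat.lt_succ_iff]

lemma coeff_zero_of (N : ℕ) (D : ℕ → ℝ)
    (h : ∀ u : ℝ, ∑ i ∈ Finset.range (N+1), D i * besselQ' i u = 0) :
    ∀ k, k ≤ N → D k = 0 := by
  have hpoly : (∑ i ∈ Finset.range (N+1), Polynomial.C (D i) * Qp i) = 0 := by
    apply Polynomial.funext
    intro u
    rw [Polynomial.eval_finset_sum]
    simp only [Polynomial.eval_mul, Polynomial.eval_C, Qp_eval, Polynomial.eval_zero]
    exact h u
  have hcoeff : ∀ j, ∑ i ∈ Finset.range (N+1), D i * (if j ≤ i then pc i j else 0) = 0 := by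
    intro j
    have h2 := congrArg (fun P => Polynomial.coeff P j) hpoly
    simpa [Polynomial.finset_sum_coeff, Polynomial.coeff_C_mul, Qp_coeff] using h2
  suffices H : ∀ s k, k ≤ N → N ≤ k + s → D k = 0 by
    intro k hk
    exact H (N - k) k hk (by omega)
  intro s
  induction s with
  | zero =>
      intro k hk hle
      have hkN : k = N := by omega
      subst hkN
      have h3 := hcoeff k
      rw [Finset.sum_eq_single_of_mem k (Finset.mem_range.mpr (by omega))
        (fun i hi hne => by
          rw [if_neg (by simp only [Finset.mem_range] at hi; omega), mul_zero])] at h3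
      rw [if_pos (le_refl k)] at h3
      exact (mul_eq_zero.mp h3).resolve_right (pc_self_ne_zero k)
  | succ s ih =>
      intro k hk hle
      by_cases hks : N ≤ k + s
      · exact ih k hk hks
      have h3 := hcoeff k
      rw [Finset.sum_eq_single_of_mem k (Finset.mem_range.mpr (by omega))
        (fun i hi hne => by
          simp only [Finset.mem_range] at hi
          rcases lt_or_gt_of_ne hne with hlt | hgt
          · rw [if_neg (by omega), mul_zero]
          · rw [ih i (by omega) (by omega), zero_mul])] at h3
      rw [if_pos (le_refl k)] at h3
      exact (mul_eq_zero.mp h3).resolve_right (pc_self_ne_zero k)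

lemma besselQ_eq_besselQ' : besselQ = besselQ' := rfl

/-- Explicit double-sum formula for the linearization coefficients
`β_k^{(n,m)}(a₁,a₂)` of `q_n(a₁u) q_m(a₂u) = ∑_{k=0}^{n+m} β_k^{(n,m)}(a₁,a₂) q_k(u)`. -/
theorem linearization_doubleSum_formula (n m k : ℕ) (hk : k ≤ n + m)
    (a1 a2 : ℝ) (ha1 : a1 ≠ 0) (ha2 : a2 ≠ 0) (β : ℕ → ℝ)
    (hβ : ∀ u : ℝ, besselQ n (a1 * u) * besselQ m (a2 * u) =
      ∑ i ∈ Finset.range (n + m + 1), β i * besselQ i u) :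
    β k =
      a1 ^ ((k : ℤ) - (m : ℤ)) * a2 ^ ((k : ℤ) - (n : ℤ)) * poch (1 / 2) k /
        (4 ^ (m + n - k) * ((m + n - k).factorial : ℝ) * poch (1 / 2) n * poch (1 / 2) m) *
      ∑ i ∈ Finset.range (m + n - k + 1),
        a1 ^ (m + n - k - i) * ((m + n - k).choose i : ℝ) * poch ((n : ℝ) + 1 - (i : ℝ)) (2 * i) *
        ∑ j ∈ Finset.range (m + n - k - i + 1),
          (-1 : ℝ) ^ j * ((m + n - k - i).choose j : ℝ) *
            poch (-(n : ℝ) + (k : ℝ) + (j : ℝ) + (i : ℝ) + 1) (2 * (m + n - k - i - j)) *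
            poch ((k : ℝ) + 2 - (j : ℝ)) (2 * j) * a2 ^ (j + i) := by
  have hzero : ∀ u : ℝ, ∑ i ∈ Finset.range (n+m+1),
      (β i - gam n m a1 a2 i) * besselQ' i u = 0 := by
    intro u
    have h1 := hβ u
    rw [besselQ_eq_besselQ'] at h1
    have h2 := key_identity n m a1 a2 ha1 ha2 u
    have h3 : ∑ i ∈ Finset.range (n+m+1), (β i - gam n m a1 a2 i) * besselQ' i u
        = (∑ i ∈ Finset.range (n+m+1), β i * besselQ' i u)
          - ∑ i ∈ Finset.range (n+m+1), gam n m a1 a2 i * besselQ' i u := by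
      rw [← Finset.sum_sub_distrib]
      exact Finset.sum_congr rfl (fun i _ => by ring)
    rw [h3, ← h1, ← h2, sub_self]
  have hD := coeff_zero_of (n+m) (fun i => β i - gam n m a1 a2 i) hzero k hk
  have hβk : β k = gam n m a1 a2 k := by
    have := hD
    linarith
  rw [hβk, gam]
end

section
/- For all integers n, m ≥ 1, every integer k with 0 ≤ k ≤ n+m−1, and every real number a, the linearization coefficients with a₁ = a and a₂ = 1−a satisfy the Berg–Vignat recurrence (1/(2k+1)) · β_{k+1}^{(n,m)}(a, 1−a) = (a²/(2n−1)) · β_k^{(n−1,m)}(a, 1−a) + ((1−a)²/(2m−1)) · β_k^{(n,m−1)}(a, 1−a). -/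
open Finset

open Polynomial

noncomputable def bc (n k : ℕ) : ℝ :=
  ((n.factorial : ℝ) * (2 * n - k).factorial * 2 ^ k) /
      ((2 * n).factorial * (n - k).factorial * k.factorial)

noncomputable def bP (n : ℕ) : Polynomial ℝ :=
  ∑ k ∈ Finset.range (n + 1), C (bc n k) * X ^ k

lemma fact_ne (j : ℕ) : ((j.factorial : ℝ)) ≠ 0 := Nat.cast_ne_zero.mpr (Nat.factorial_ne_zero j)

lemma bc_zero (n : ℕ) : bc n 0 = 1 := by
  simp only [bc, Nat.sub_zero, pow_zero, Nat.factorial_zero, Nat.cast_one, mul_one]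
  rw [div_eq_one_iff_eq (by positivity)]
  ring
lemma bc_one (p : ℕ) : bc (p+1) 1 = 1 := by
  have e1 : 2*(p+1) - 1 = (2*p+1) := by omega
  have e2 : (p+1) - 1 = p := by omega
  have f1 : (2*(p+1)).factorial = (2*p+2) * ((2*p+1).factorial) := by
    rw [show 2*(p+1) = (2*p+1)+1 by omega, Nat.factorial_succ]
  rw [bc, e1, e2, f1]
  have h1 := fact_ne (2*p+1); have h2 := fact_ne p; have h3 := fact_ne (p+1)
  field_simp
  rw [Nat.factorial_succ]
  push_cast; ring

lemma bc_mid (i t : ℕ) :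
    bc (i+t+2) (i+1) - ((i:ℝ)+2) * bc (i+t+2) (i+2) = (1/(2*(i+t+1:ℝ)+1)) * bc (i+t+1) i := by
  have e1 : 2*(i+t+2) - (i+1) = i+2*t+3 := by omega
  have e2 : (i+t+2) - (i+1) = t+1 := by omega
  have e3 : 2*(i+t+2) - (i+2) = i+2*t+2 := by omega
  have e4 : (i+t+2) - (i+2) = t := by omega
  have e5 : 2*(i+t+1) - i = i+2*t+2 := by omega
  have e6 : (i+t+1) - i = t+1 := by omega
  have f1 : (i+2*t+3).factorial = (i+2*t+3) * (i+2*t+2).factorial := by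
    rw [show i+2*t+3 = (i+2*t+2)+1 by omega, Nat.factorial_succ]
  have f2 : (2*(i+t+2)).factorial = (2*i+2*t+4) * ((2*i+2*t+3) * (2*(i+t+1)).factorial) := by
    rw [show 2*(i+t+2) = (2*(i+t+1)+1)+1 by omega, Nat.factorial_succ, Nat.factorial_succ]
    ring_nf
  have f3 : (i+t+2).factorial = (i+t+2) * (i+t+1).factorial := by
    rw [show i+t+2 = (i+t+1)+1 by omega, Nat.factorial_succ]
  have f4 : (t+1).factorial = (t+1) * t.factorial := Nat.factorial_succ t
  have f5 : (i+1).factorial = (i+1) * i.factorial := Nat.factorial_succ i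
  have f6 : (i+2).factorial = (i+2) * ((i+1) * i.factorial) := by
    rw [show i+2 = (i+1)+1 by omega, Nat.factorial_succ, f5]
  simp only [bc, e1, e2, e3, e4, e5, e6, f1, f2, f3, f4, f5, f6]
  have h1 := fact_ne (i+2*t+2); have h2 := fact_ne (2*(i+t+1)); have h3 := fact_ne t
  have h4 := fact_ne i; have h5 := fact_ne (i+t+1)
  have h6 : (2*(i+t+1:ℝ)+1) ≠ 0 := by positivity
  push_cast
  field_simp
  ring

lemma bc_top (p : ℕ) : (2*(p:ℝ)+1) * bc (p+1) (p+1) = bc p p := by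
  have e1 : 2*(p+1) - (p+1) = p+1 := by omega
  have e2 : (p+1) - (p+1) = 0 := by omega
  have e3 : 2*p - p = p := by omega
  have e4 : p - p = 0 := by omega
  have f1 : (2*(p+1)).factorial = (2*p+2) * ((2*p+1) * (2*p).factorial) := by
    rw [show 2*(p+1) = ((2*p)+1)+1 by omega, Nat.factorial_succ, Nat.factorial_succ]
  have f2 : (p+1).factorial = (p+1) * p.factorial := Nat.factorial_succ p
  simp only [bc, e1, e2, e3, e4, f1, f2, Nat.factorial_zero]
  have h1 := fact_ne p; have h2 := fact_ne (2*p)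
  push_cast
  field_simp
  ring

lemma coeff_bP (n j : ℕ) : (bP n).coeff j = if j ≤ n then bc n j else 0 := by
  rw [bP, Polynomial.finset_sum_coeff]
  simp only [Polynomial.coeff_C_mul, Polynomial.coeff_X_pow, mul_ite, mul_one, mul_zero]
  rw [Finset.sum_ite_eq (Finset.range (n+1)) j (fun k => bc n k)]
  simp [Nat.lt_succ_iff]

lemma keyP (p : ℕ) :
    bP (p+1) - derivative (bP (p+1)) = C (1/(2*(p:ℝ)+1)) * (X * bP p) := by
  ext j
  rw [Polynomial.coeff_sub, Polynomial.coeff_derivative, Polynomial.coeff_C_mul]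
  cases j with
  | zero =>
      simp [coeff_bP, bc_zero, bc_one]
  | succ i =>
      rw [Polynomial.coeff_X_mul]
      simp only [coeff_bP]
      rcases lt_trichotomy i p with h | rfl | h
      · obtain ⟨t, rfl⟩ : ∃ t, p = i + t + 1 := ⟨p - i - 1, by omega⟩
        rw [if_pos (by omega), if_pos (by omega), if_pos (by omega)]
        have := bc_mid i t
        push_cast
        push_cast at this
        nlinarith [this]
      · rw [if_pos (by omega), if_neg (by omega), if_pos (by omega), ← bc_top i]
        have h : (2*(i:ℝ)+1) ≠ 0 := by positivity
        push_cast
        field_simp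
        ring
      · rw [if_neg (by omega), if_neg (by omega), if_neg (by omega)]
        ring

lemma bP_eval (n : ℕ) (u : ℝ) : (bP n).eval u = besselQ n u := by
  simp [bP, besselQ, bc, Polynomial.eval_finset_sum]


lemma bP_zero : bP 0 = 1 := by
  simp [bP, bc_zero]

lemma bc_pos (n k : ℕ) : 0 < bc n k := by
  rw [bc]
  have h1 : (0:ℝ) < n.factorial := by positivity
  have h2 : (0:ℝ) < ((2*n - k).factorial : ℝ) := by positivity
  have h3 : (0:ℝ) < ((2*n).factorial : ℝ) := by positivity
  have h4 : (0:ℝ) < ((n - k).factorial : ℝ) := by positivity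
  have h5 : (0:ℝ) < (k.factorial : ℝ) := by positivity
  positivity

lemma indep : ∀ (N : ℕ) (d : ℕ → ℝ),
    (∑ j ∈ Finset.range N, C (d j) * bP j = 0) → ∀ j < N, d j = 0 := by
  intro N
  induction N with
  | zero => intro d h j hj; omega
  | succ N ih =>
      intro d h j hj
      have hc := congrArg (fun q : Polynomial ℝ => q.coeff N) h
      simp only [Polynomial.finset_sum_coeff, Polynomial.coeff_C_mul, coeff_bP,
        Polynomial.coeff_zero] at hc
      rw [Finset.sum_range_succ, if_pos le_rfl,
        Finset.sum_eq_zero (fun i hi => by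
          rw [if_neg (by simp only [Finset.mem_range] at hi; omega), mul_zero]),
        zero_add] at hc
      have hdN : d N = 0 := by
        rcases mul_eq_zero.mp hc with h' | h'
        · exact h'
        · exact absurd h' (ne_of_gt (bc_pos N N))
      rcases Nat.lt_succ_iff_lt_or_eq.mp hj with hj' | rfl
      · apply ih d _ j hj'
        rw [Finset.sum_range_succ, hdN, map_zero, zero_mul, add_zero] at h
        exact h
      · exact hdN

lemma sumFormula (N : ℕ) (c : ℕ → ℝ) :
    (∑ k ∈ Finset.range (N+1), C (c k) * bP k) -
        derivative (∑ k ∈ Finset.range (N+1), C (c k) * bP k)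
      = C (c 0) + X * ∑ j ∈ Finset.range N, C (c (j+1) * (1/(2*(j:ℝ)+1))) * bP j := by
  rw [derivative_sum, ← Finset.sum_sub_distrib]
  rw [Finset.sum_congr rfl (fun k _ => by
    rw [Polynomial.derivative_C_mul, ← mul_sub] :
      ∀ k ∈ Finset.range (N+1), C (c k) * bP k - derivative (C (c k) * bP k)
        = C (c k) * (bP k - derivative (bP k)))]
  rw [Finset.sum_range_succ']
  rw [Finset.sum_congr rfl (fun j _ => by
    rw [keyP j, Polynomial.C_mul]; ring :
      ∀ j ∈ Finset.range N, C (c (j+1)) * (bP (j+1) - derivative (bP (j+1)))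
        = X * (C (c (j+1) * (1/(2*(j:ℝ)+1))) * bP j))]
  rw [← Finset.mul_sum, bP_zero]
  simp [add_comm]


/-- Berg–Vignat recurrence for the linearization coefficients with `a₁ = a`, `a₂ = 1−a`:
`(1/(2k+1)) β_{k+1}^{(n,m)}(a) = (a²/(2n−1)) β_k^{(n−1,m)}(a) + ((1−a)²/(2m−1)) β_k^{(n,m−1)}(a)`.
Here `β n m` is the family of linearization coefficients of `q_n(au) q_m((1−a)u)`. -/
theorem bergVignat_recurrence (a : ℝ) (β : ℕ → ℕ → ℕ → ℝ)
    (hβ : ∀ n m : ℕ, ∀ u : ℝ, besselQ n (a * u) * besselQ m ((1 - a) * u) =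
      ∑ k ∈ Finset.range (n + m + 1), β n m k * besselQ k u)
    (n m k : ℕ) (hn : 1 ≤ n) (hm : 1 ≤ m) (hk : k ≤ n + m - 1) :
    (1 / (2 * (k : ℝ) + 1)) * β n m (k + 1) =
      a ^ 2 / (2 * (n : ℝ) - 1) * β (n - 1) m k +
        (1 - a) ^ 2 / (2 * (m : ℝ) - 1) * β n (m - 1) k := by
  obtain ⟨p, rfl⟩ : ∃ p, n = p + 1 := ⟨n - 1, by omega⟩
  obtain ⟨q, rfl⟩ : ∃ q, m = q + 1 := ⟨m - 1, by omega⟩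
  -- the product polynomials
  set F : ℕ → ℕ → Polynomial ℝ := fun n m =>
    ((bP n).comp (C a * X)) * ((bP m).comp (C (1 - a) * X)) with hFdef
  have hF : ∀ n m : ℕ, F n m = ∑ j ∈ Finset.range (n + m + 1), C (β n m j) * bP j := by
    intro n m
    apply Polynomial.funext
    intro u
    simp only [hFdef, Polynomial.eval_mul, Polynomial.eval_comp, Polynomial.eval_finset_sum,
      Polynomial.eval_C, Polynomial.eval_X, Polynomial.eval_mul, bP_eval]
    simpa using hβ n m u
  -- comp'd key identities
  have k1 : (bP (p+1)).comp (C a * X) - (derivative (bP (p+1))).comp (C a * X)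
      = C (1/(2*(p:ℝ)+1)) * ((C a * X) * (bP p).comp (C a * X)) := by
    rw [← Polynomial.sub_comp, keyP p]
    simp [Polynomial.mul_comp]
  have k2 : (bP (q+1)).comp (C (1-a) * X) - (derivative (bP (q+1))).comp (C (1-a) * X)
      = C (1/(2*(q:ℝ)+1)) * ((C (1-a) * X) * (bP q).comp (C (1-a) * X)) := by
    rw [← Polynomial.sub_comp, keyP q]
    simp [Polynomial.mul_comp]
  have hab : C a + C (1-a) = (1 : Polynomial ℝ) := by
    rw [← Polynomial.C_add]; norm_num
  -- derivative of F
  have hd : derivative (F (p+1) (q+1)) =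
      C a * ((derivative (bP (p+1))).comp (C a * X)) * (bP (q+1)).comp (C (1-a) * X)
      + C (1-a) * ((bP (p+1)).comp (C a * X)) * ((derivative (bP (q+1))).comp (C (1-a) * X)) := by
    simp only [hFdef, derivative_mul, Polynomial.derivative_comp]
    simp only [Polynomial.derivative_C_mul, Polynomial.derivative_X, Polynomial.derivative_C,
      mul_one, zero_mul, mul_zero, zero_add, add_zero]
    ring
  -- main algebraic identity
  have hE : F (p+1) (q+1) - derivative (F (p+1) (q+1)) =
      X * (C a * C a * C (1/(2*(p:ℝ)+1)) * F p (q+1)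
        + C (1-a) * C (1-a) * C (1/(2*(q:ℝ)+1)) * F (p+1) q) := by
    rw [hd]
    simp only [hFdef]
    linear_combination (C a * ((bP (q+1)).comp (C (1-a) * X))) * k1
      + (C (1-a) * ((bP (p+1)).comp (C a * X))) * k2
      - (((bP (p+1)).comp (C a * X)) * ((bP (q+1)).comp (C (1-a) * X))) * hab
  -- expand the derivative side using the linearization
  have hG : F (p+1) (q+1) - derivative (F (p+1) (q+1)) =
      C (β (p+1) (q+1) 0) + X * ∑ j ∈ Finset.range (p+q+2),
        C (β (p+1) (q+1) (j+1) * (1/(2*(j:ℝ)+1))) * bP j := by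
    rw [hF (p+1) (q+1)]
    have : (p+1) + (q+1) + 1 = (p+q+2) + 1 := by ring
    rw [this, sumFormula (p+q+2) (β (p+1) (q+1))]
  -- rewrite the right side of hE via linearizations
  have hR : F (p+1) (q+1) - derivative (F (p+1) (q+1)) =
      X * ∑ j ∈ Finset.range (p+q+2),
        C (a^2 * (1/(2*(p:ℝ)+1)) * β p (q+1) j + (1-a)^2 * (1/(2*(q:ℝ)+1)) * β (p+1) q j)
          * bP j := by
    rw [hE, hF p (q+1), hF (p+1) q]
    rw [show p + (q+1) + 1 = p+q+2 by ring, show (p+1) + q + 1 = p+q+2 by ring]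
    rw [Finset.mul_sum, Finset.mul_sum, ← Finset.sum_add_distrib]
    congr 1
    apply Finset.sum_congr rfl
    intro j _
    simp only [Polynomial.C_add, Polynomial.C_mul, map_pow]
    ring
  -- β0 vanishes
  have hcomb : C (β (p+1) (q+1) 0) + X * ∑ j ∈ Finset.range (p+q+2),
        C (β (p+1) (q+1) (j+1) * (1/(2*(j:ℝ)+1))) * bP j
      = X * ∑ j ∈ Finset.range (p+q+2),
        C (a^2 * (1/(2*(p:ℝ)+1)) * β p (q+1) j + (1-a)^2 * (1/(2*(q:ℝ)+1)) * β (p+1) q j)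
          * bP j := by rw [← hG, hR]
  have hβ0 : β (p+1) (q+1) 0 = 0 := by
    have := congrArg (fun r : Polynomial ℝ => r.coeff 0) hcomb
    simpa [Polynomial.mul_coeff_zero] using this
  have hsum : ∑ j ∈ Finset.range (p+q+2),
        C (β (p+1) (q+1) (j+1) * (1/(2*(j:ℝ)+1))
          - (a^2 * (1/(2*(p:ℝ)+1)) * β p (q+1) j + (1-a)^2 * (1/(2*(q:ℝ)+1)) * β (p+1) q j))
          * bP j = 0 := by
    have hX : (∑ j ∈ Finset.range (p+q+2),
        C (β (p+1) (q+1) (j+1) * (1/(2*(j:ℝ)+1))) * bP j)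
        = (∑ j ∈ Finset.range (p+q+2),
        C (a^2 * (1/(2*(p:ℝ)+1)) * β p (q+1) j + (1-a)^2 * (1/(2*(q:ℝ)+1)) * β (p+1) q j)
          * bP j) := by
      apply mul_left_cancel₀ (Polynomial.X_ne_zero (R := ℝ))
      rw [hβ0] at hcomb
      simpa using hcomb
    rw [Finset.sum_congr rfl (fun j _ => by rw [Polynomial.C_sub, sub_mul] :
      ∀ j ∈ Finset.range (p+q+2),
        C (β (p+1) (q+1) (j+1) * (1/(2*(j:ℝ)+1))
          - (a^2 * (1/(2*(p:ℝ)+1)) * β p (q+1) j + (1-a)^2 * (1/(2*(q:ℝ)+1)) * β (p+1) q j))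
          * bP j
        = C (β (p+1) (q+1) (j+1) * (1/(2*(j:ℝ)+1))) * bP j
          - C (a^2 * (1/(2*(p:ℝ)+1)) * β p (q+1) j
              + (1-a)^2 * (1/(2*(q:ℝ)+1)) * β (p+1) q j) * bP j)]
    rw [Finset.sum_sub_distrib, hX, sub_self]
  have hfin := indep (p+q+2) _ hsum k (by omega)
  have hp1 : ((p:ℝ)+1) = ((p+1 : ℕ) : ℝ) := by push_cast; ring
  have hq1 : ((q:ℝ)+1) = ((q+1 : ℕ) : ℝ) := by push_cast; ring
  simp only [Nat.add_sub_cancel]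
  push_cast
  have h2p : (2*(p:ℝ)+1) ≠ 0 := by positivity
  have h2q : (2*(q:ℝ)+1) ≠ 0 := by positivity
  have h2k : (2*(k:ℝ)+1) ≠ 0 := by positivity
  have : β (p+1) (q+1) (k+1) * (1/(2*(k:ℝ)+1))
      = a^2 * (1/(2*(p:ℝ)+1)) * β p (q+1) k + (1-a)^2 * (1/(2*(q:ℝ)+1)) * β (p+1) q k := by
    linarith [hfin]
  rw [show 2*((p:ℝ)+1) - 1 = 2*(p:ℝ)+1 by ring, show 2*((q:ℝ)+1) - 1 = 2*(q:ℝ)+1 by ring]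
  field_simp at this ⊢
  linarith [this]
end
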